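/- (Canonicalization characterizes behavioral equivalence.) For any R, R' ∈ ℝ^d, R and R' are behaviorally equivalent (i.e., for every environment on S = Fin d, the set of policies optimal for the environment and R equals the set of policies optimal for the environment and R') if and only if the canonical forms of R and R' are equal. -/

import Mathlib

open Matrix

/-- A `d × d` real matrix is row-stochastic if all entries are nonnegative
and each row sums to `1`. -/
def RowStochastic {d : ℕ} (P : Matrix (Fin d) (Fin d) ℝ) : Prop :=
  (∀ s s', 0 ≤ P s s') ∧ (∀ s, ∑ s', P s s' = 1)

/-- Transition matrix of a policy `π`: its `s`-th row is the `s`-th row of `P (π s)`. -/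
def policyMatrix {d m : ℕ} (P : Fin m → Matrix (Fin d) (Fin d) ℝ) (π : Fin d → Fin m) :
    Matrix (Fin d) (Fin d) ℝ :=
  Matrix.of fun s s' => P (π s) s s'

/-- Value vector of the policy `π` for discount `γ`, transition matrices `P`,
and reward vector `R`: `V_π(R) = (I − γ P_π)⁻¹ R`. -/
noncomputable def valueVec {d m : ℕ} (γ : ℝ) (P : Fin m → Matrix (Fin d) (Fin d) ℝ)
    (π : Fin d → Fin m) (R : Fin d → ℝ) : Fin d → ℝ :=
  ((1 : Matrix (Fin d) (Fin d) ℝ) - γ • policyMatrix P π)⁻¹ *ᵥ R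

/-- `π` is optimal for the environment `(P, γ)` and reward `R` if its value vector
dominates that of every other policy componentwise. -/
def IsOptimal {d m : ℕ} (γ : ℝ) (P : Fin m → Matrix (Fin d) (Fin d) ℝ)
    (π : Fin d → Fin m) (R : Fin d → ℝ) : Prop :=
  ∀ π' : Fin d → Fin m, ∀ s, valueVec γ P π' R s ≤ valueVec γ P π R s

open Classical

/-- The canonical form of a reward vector: the zero vector if `R` is constant, and
otherwise `(R − (min_s R s)·1) / (max_s R s − min_s R s)`. -/
noncomputable def canon {d : ℕ} [NeZero d] (R : Fin d → ℝ) : Fin d → ℝ :=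
  if ∃ c : ℝ, R = fun _ => c then 0
  else fun s =>
    (R s - Finset.univ.inf' Finset.univ_nonempty R) /
      (Finset.univ.sup' Finset.univ_nonempty R - Finset.univ.inf' Finset.univ_nonempty R)

namespace BehavAux

set_option linter.unusedSectionVars false

variable {d : ℕ} [NeZero d]

lemma stoch_policy {m : ℕ} {P : Fin m → Matrix (Fin d) (Fin d) ℝ}
    (h : ∀ a, RowStochastic (P a)) (π : Fin d → Fin m) :
    RowStochastic (policyMatrix P π) :=
  ⟨fun s t => (h (π s)).1 s t, fun s => (h (π s)).2 s⟩

lemma mulVec_apply (Q : Matrix (Fin d) (Fin d) ℝ) (v : Fin d → ℝ) (s : Fin d) :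
    (Q *ᵥ v) s = ∑ t, Q s t * v t := rfl

lemma isUnit_one_sub_smul {Q : Matrix (Fin d) (Fin d) ℝ} (hQ : RowStochastic Q)
    {γ : ℝ} (h0 : 0 ≤ γ) (h1 : γ < 1) :
    IsUnit ((1 : Matrix (Fin d) (Fin d) ℝ) - γ • Q) := by
  rw [← Matrix.mulVec_injective_iff_isUnit]
  have key : ∀ w : Fin d → ℝ, ((1 : Matrix (Fin d) (Fin d) ℝ) - γ • Q) *ᵥ w = 0 → w = 0 := by
    intro w hw
    have hfix : ∀ t, w t = γ * ((Q *ᵥ w) t) := by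
      intro t
      have h' := congrFun hw t
      simp only [Matrix.sub_mulVec, Matrix.one_mulVec, Matrix.smul_mulVec,
        Pi.sub_apply, Pi.smul_apply, smul_eq_mul, Pi.zero_apply, sub_eq_zero] at h'
      exact h'
    obtain ⟨s, -, hs⟩ := Finset.exists_mem_eq_sup' (Finset.univ_nonempty (α := Fin d))
      (fun t => |w t|)
    have hle : ∀ t, |w t| ≤ |w s| := by
      intro t
      have := Finset.le_sup' (fun t => |w t|) (Finset.mem_univ t)
      rw [← hs]; exact this
    have hbound : |w s| ≤ γ * |w s| := by
      calc |w s| = γ * |(Q *ᵥ w) s| := by rw [hfix s, abs_mul, abs_of_nonneg h0]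
        _ ≤ γ * ∑ t, Q s t * |w t| := by
            apply mul_le_mul_of_nonneg_left _ h0
            calc |(Q *ᵥ w) s| = |∑ t, Q s t * w t| := by rw [mulVec_apply]
              _ ≤ ∑ t, |Q s t * w t| := Finset.abs_sum_le_sum_abs _ _
              _ = ∑ t, Q s t * |w t| := by
                  refine Finset.sum_congr rfl fun t _ => ?_
                  rw [abs_mul, abs_of_nonneg (hQ.1 s t)]
        _ ≤ γ * ∑ t, Q s t * |w s| := by
            apply mul_le_mul_of_nonneg_left _ h0
            exact Finset.sum_le_sum fun t _ => mul_le_mul_of_nonneg_left (hle t) (hQ.1 s t)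
        _ = γ * |w s| := by rw [← Finset.sum_mul, hQ.2 s, one_mul]
    have hzero : |w s| = 0 := by nlinarith [abs_nonneg (w s)]
    funext t
    have ht := hle t
    rw [hzero] at ht
    have : |w t| = 0 := le_antisymm ht (abs_nonneg _)
    simpa using abs_eq_zero.mp this
  intro u v huv
  have : ((1 : Matrix (Fin d) (Fin d) ℝ) - γ • Q) *ᵥ (u - v) = 0 := by
    rw [Matrix.mulVec_sub, huv, sub_self]
  exact sub_eq_zero.mp (key _ this)

lemma value_unique {Q : Matrix (Fin d) (Fin d) ℝ} (hQ : RowStochastic Q)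
    {γ : ℝ} (h0 : 0 ≤ γ) (h1 : γ < 1) {R v : Fin d → ℝ}
    (hv : ∀ s, v s = R s + γ * ((Q *ᵥ v) s)) :
    ((1 : Matrix (Fin d) (Fin d) ℝ) - γ • Q)⁻¹ *ᵥ R = v := by
  have hu := isUnit_one_sub_smul hQ h0 h1
  have hdet := (Matrix.isUnit_iff_isUnit_det _).mp hu
  have hAv : ((1 : Matrix (Fin d) (Fin d) ℝ) - γ • Q) *ᵥ v = R := by
    funext s
    simp only [Matrix.sub_mulVec, Matrix.one_mulVec, Matrix.smul_mulVec,
      Pi.sub_apply, Pi.smul_apply, smul_eq_mul]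
    rw [hv s]; ring
  calc ((1 : Matrix (Fin d) (Fin d) ℝ) - γ • Q)⁻¹ *ᵥ R
      = ((1 : Matrix (Fin d) (Fin d) ℝ) - γ • Q)⁻¹ *ᵥ
        (((1 : Matrix (Fin d) (Fin d) ℝ) - γ • Q) *ᵥ v) := by rw [hAv]
    _ = (((1 : Matrix (Fin d) (Fin d) ℝ) - γ • Q)⁻¹ *
        ((1 : Matrix (Fin d) (Fin d) ℝ) - γ • Q)) *ᵥ v := by rw [Matrix.mulVec_mulVec]
    _ = v := by rw [Matrix.nonsing_inv_mul _ hdet, Matrix.one_mulVec]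

lemma value_fixed {Q : Matrix (Fin d) (Fin d) ℝ} (hQ : RowStochastic Q)
    {γ : ℝ} (h0 : 0 ≤ γ) (h1 : γ < 1) (R : Fin d → ℝ) (s : Fin d) :
    (((1 : Matrix (Fin d) (Fin d) ℝ) - γ • Q)⁻¹ *ᵥ R) s
      = R s + γ * ((Q *ᵥ (((1 : Matrix (Fin d) (Fin d) ℝ) - γ • Q)⁻¹ *ᵥ R)) s) := by
  have hu := isUnit_one_sub_smul hQ h0 h1
  have hdet := (Matrix.isUnit_iff_isUnit_det _).mp hu
  have hAV : ((1 : Matrix (Fin d) (Fin d) ℝ) - γ • Q) *ᵥ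
      (((1 : Matrix (Fin d) (Fin d) ℝ) - γ • Q)⁻¹ *ᵥ R) = R := by
    rw [Matrix.mulVec_mulVec, Matrix.mul_nonsing_inv _ hdet, Matrix.one_mulVec]
  have h' := congrFun hAV s
  simp only [Matrix.sub_mulVec, Matrix.one_mulVec, Matrix.smul_mulVec,
    Pi.sub_apply, Pi.smul_apply, smul_eq_mul] at h'
  linarith [h']

/-- value of a constant reward is constant, for every policy. -/
lemma valueVec_const {m : ℕ} {P : Fin m → Matrix (Fin d) (Fin d) ℝ}
    (hP : ∀ a, RowStochastic (P a)) {γ : ℝ} (h0 : 0 < γ) (h1 : γ < 1)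
    (π : Fin d → Fin m) (c : ℝ) :
    valueVec γ P π (fun _ => c) = fun _ => c / (1 - γ) := by
  have hQ := stoch_policy hP π
  have hne : (1 : ℝ) - γ ≠ 0 := by linarith
  apply value_unique hQ h0.le h1
  intro s
  have hmv : (policyMatrix P π *ᵥ (fun _ => c / (1 - γ))) s = c / (1 - γ) := by
    rw [mulVec_apply, ← Finset.sum_mul, hQ.2 s, one_mul]
  rw [hmv]; field_simp; ring

/-- value vector is affine in the reward. -/
lemma valueVec_affine {m : ℕ} {P : Fin m → Matrix (Fin d) (Fin d) ℝ}
    (hP : ∀ a, RowStochastic (P a)) {γ : ℝ} (h0 : 0 < γ) (h1 : γ < 1)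
    (π : Fin d → Fin m) (R : Fin d → ℝ) (a b : ℝ) :
    valueVec γ P π (fun s => a * R s + b)
      = fun s => a * valueVec γ P π R s + b / (1 - γ) := by
  have hQ := stoch_policy hP π
  have hne : (1 : ℝ) - γ ≠ 0 := by linarith
  apply value_unique hQ h0.le h1
  intro s
  have hfix := value_fixed hQ h0.le h1 R s
  have hmv : (policyMatrix P π *ᵥ (fun t => a * valueVec γ P π R t + b / (1 - γ))) s
      = a * ((policyMatrix P π *ᵥ valueVec γ P π R) s) + b / (1 - γ) := by
    rw [mulVec_apply, mulVec_apply]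
    have : ∀ t, policyMatrix P π s t * (a * valueVec γ P π R t + b / (1 - γ))
        = a * (policyMatrix P π s t * valueVec γ P π R t)
          + (b / (1 - γ)) * policyMatrix P π s t := by intro t; ring
    rw [Finset.sum_congr rfl fun t _ => this t, Finset.sum_add_distrib,
      ← Finset.mul_sum, ← Finset.mul_sum, hQ.2 s, mul_one]
  rw [hmv]
  have hVs : valueVec γ P π R s
      = R s + γ * ((policyMatrix P π *ᵥ valueVec γ P π R) s) := hfix
  rw [hVs]
  field_simp
  ring

/-- The two-action environment that compares the distributions `p` and `q`:
the all-`0` policy is optimal iff `q ⬝ R ≤ p ⬝ R`. -/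
lemma env_char (R p q : Fin d → ℝ) (hp0 : ∀ t, 0 ≤ p t) (hp1 : ∑ t, p t = 1)
    (hq0 : ∀ t, 0 ≤ q t) (hq1 : ∑ t, q t = 1) :
    IsOptimal (1/2) (fun a : Fin 2 => Matrix.of fun _ t => if a = 0 then p t else q t)
      (fun _ => 0) R ↔ ∑ t, q t * R t ≤ ∑ t, p t * R t := by
  set γ : ℝ := 1/2 with hγdef
  have hγ0 : (0 : ℝ) < γ := by norm_num
  have hγ1 : γ < 1 := by norm_num
  set P : Fin 2 → Matrix (Fin d) (Fin d) ℝ :=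
    fun a => Matrix.of fun _ t => if a = 0 then p t else q t with hPdef
  have hPs : ∀ a, RowStochastic (P a) := by
    intro a
    constructor
    · intro s t
      by_cases ha : a = 0 <;> simp [hPdef, ha, hp0 t, hq0 t]
    · intro s
      by_cases ha : a = 0 <;> simp [hPdef, ha, hp1, hq1]
  have hrow : ∀ (π₀ : Fin d → Fin 2) (u t : Fin d),
      policyMatrix P π₀ u t = if π₀ u = 0 then p t else q t := by
    intro π₀ u t
    by_cases h : π₀ u = 0 <;> simp [policyMatrix, hPdef, h]
  -- value of a policy whose rows are all `r`
  have key : ∀ (π₀ : Fin d → Fin 2) (r : Fin d → ℝ), (∑ t, r t = 1) →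
      (∀ u t, policyMatrix P π₀ u t = r t) →
      valueVec γ P π₀ R = fun s => R s + γ * ((∑ t, r t * R t) / (1 - γ)) := by
    intro π₀ r hr1 hr
    apply value_unique (stoch_policy hPs π₀) hγ0.le hγ1
    intro s
    have hmv : (policyMatrix P π₀ *ᵥ
        (fun u => R u + γ * ((∑ t, r t * R t) / (1 - γ)))) s
        = (∑ t, r t * R t) + γ * ((∑ t, r t * R t) / (1 - γ)) := by
      rw [mulVec_apply]
      have : ∀ t, policyMatrix P π₀ s t * (R t + γ * ((∑ t, r t * R t) / (1 - γ)))
          = r t * R t + (γ * ((∑ t, r t * R t) / (1 - γ))) * r t := by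
        intro t; rw [hr s t]; ring
      rw [Finset.sum_congr rfl fun t _ => this t, Finset.sum_add_distrib,
        ← Finset.mul_sum, hr1, mul_one]
    rw [hmv]
    have hne : (1 : ℝ) - γ ≠ 0 := by norm_num [hγdef]
    have hD : (∑ t, r t * R t) / (1 - γ)
        = (∑ t, r t * R t) + γ * ((∑ t, r t * R t) / (1 - γ)) := by
      rw [hγdef]
      ring
    linarith [hD]
  have hV0 : valueVec γ P (fun _ => 0) R
      = fun s => R s + γ * ((∑ t, p t * R t) / (1 - γ)) :=
    key _ p hp1 (fun u t => by rw [hrow]; simp)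
  have hV1 : valueVec γ P (fun _ => 1) R
      = fun s => R s + γ * ((∑ t, q t * R t) / (1 - γ)) :=
    key _ q hq1 (fun u t => by rw [hrow]; simp)
  constructor
  · intro hopt
    have s0 : Fin d := ⟨0, Nat.pos_of_ne_zero (NeZero.ne d)⟩
    have h1 := hopt (fun _ => 1) s0
    rw [congrFun hV0 s0, congrFun hV1 s0] at h1
    have hγv : γ = 1/2 := hγdef
    rw [hγv] at h1
    norm_num at h1
    linarith
  · intro hdq π' s
    rw [congrFun hV0 s]
    set V := valueVec γ P π' R with hVdef
    have hfix : ∀ t, V t = R t + γ * ((policyMatrix P π' *ᵥ V) t) :=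
      fun t => value_fixed (stoch_policy hPs π') hγ0.le hγ1 R t
    set w : Fin d → ℝ := fun t => (policyMatrix P π' *ᵥ V) t with hwdef
    obtain ⟨u, -, hu⟩ := Finset.exists_mem_eq_sup' (Finset.univ_nonempty (α := Fin d)) w
    have hleM : ∀ t, w t ≤ w u := by
      intro t
      have := Finset.le_sup' w (Finset.mem_univ t)
      rw [← hu]; exact this
    have hrowb : ∀ v : Fin d, w v ≤ (∑ t, p t * R t) + γ * w u := by
      intro v
      have hwv : w v = ∑ t, policyMatrix P π' v t * V t := rfl
      have hVle : ∀ t, V t ≤ R t + γ * w u := by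
        intro t
        rw [hfix t]
        have : (policyMatrix P π' *ᵥ V) t = w t := rfl
        rw [this]
        nlinarith [hleM t, hγ0.le]
      by_cases hv : π' v = 0
      · have : w v ≤ ∑ t, p t * (R t + γ * w u) := by
          rw [hwv]
          refine Finset.sum_le_sum fun t _ => ?_
          rw [hrow, if_pos hv]
          exact mul_le_mul_of_nonneg_left (hVle t) (hp0 t)
        calc w v ≤ ∑ t, p t * (R t + γ * w u) := this
          _ = (∑ t, p t * R t) + γ * w u := by
              have : ∀ t, p t * (R t + γ * w u) = p t * R t + (γ * w u) * p t :=
                fun t => by ring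
              rw [Finset.sum_congr rfl fun t _ => this t, Finset.sum_add_distrib,
                ← Finset.mul_sum, hp1, mul_one]
      · have : w v ≤ ∑ t, q t * (R t + γ * w u) := by
          rw [hwv]
          refine Finset.sum_le_sum fun t _ => ?_
          rw [hrow, if_neg hv]
          exact mul_le_mul_of_nonneg_left (hVle t) (hq0 t)
        calc w v ≤ ∑ t, q t * (R t + γ * w u) := this
          _ = (∑ t, q t * R t) + γ * w u := by
              have : ∀ t, q t * (R t + γ * w u) = q t * R t + (γ * w u) * q t :=
                fun t => by ring
              rw [Finset.sum_congr rfl fun t _ => this t, Finset.sum_add_distrib,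
                ← Finset.mul_sum, hq1, mul_one]
          _ ≤ (∑ t, p t * R t) + γ * w u := by linarith
    have hM : w u ≤ (∑ t, p t * R t) / (1 - γ) := by
      have := hrowb u
      have hγv : γ = 1/2 := hγdef
      rw [hγv] at this ⊢
      norm_num at this ⊢
      linarith
    have hws : w s ≤ (∑ t, p t * R t) / (1 - γ) := le_trans (hleM s) hM
    have hVs : V s = R s + γ * w s := hfix s
    rw [hVs]
    nlinarith [hγ0.le]

/-- A nonconstant vector has a strict gap between its min and max, with witnesses. -/
lemma exists_gap {R : Fin d → ℝ} (hc : ¬ ∃ c : ℝ, R = fun _ => c) :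
    ∃ smax smin : Fin d,
      Finset.univ.sup' Finset.univ_nonempty R = R smax ∧
      Finset.univ.inf' Finset.univ_nonempty R = R smin ∧
      (∀ t, R t ≤ R smax) ∧ (∀ t, R smin ≤ R t) ∧ R smin < R smax := by
  obtain ⟨smax, -, hmax⟩ := Finset.exists_mem_eq_sup' (Finset.univ_nonempty (α := Fin d)) R
  obtain ⟨smin, -, hmin⟩ := Finset.exists_mem_eq_inf' (Finset.univ_nonempty (α := Fin d)) R
  have hub : ∀ t, R t ≤ R smax := fun t => hmax ▸ Finset.le_sup' R (Finset.mem_univ t)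
  have hlb : ∀ t, R smin ≤ R t := fun t => hmin ▸ Finset.inf'_le R (Finset.mem_univ t)
  refine ⟨smax, smin, hmax, hmin, hub, hlb, ?_⟩
  rcases eq_or_lt_of_le (hlb smax) with h | h
  · exact absurd ⟨R smin, funext fun t => le_antisymm (h ▸ hub t) (hlb t)⟩ hc
  · exact h

end BehavAux

open BehavAux in
/-- **Canonicalization characterizes behavioral equivalence.** `R` and `R'` induce the
same set of optimal policies in every environment iff their canonical forms coincide. -/
theorem behaviorallyEquivalent_iff_canon_eq {d : ℕ} [NeZero d] (R R' : Fin d → ℝ) :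
    (∀ (m : ℕ), 1 ≤ m → ∀ (P : Fin m → Matrix (Fin d) (Fin d) ℝ),
      (∀ a, RowStochastic (P a)) → ∀ (γ : ℝ), 0 < γ → γ < 1 →
        ∀ π : Fin d → Fin m, IsOptimal γ P π R ↔ IsOptimal γ P π R') ↔
      canon R = canon R' := by
  constructor
  · -- behavioral equivalence implies equal canonical forms
    intro hbe
    have H : ∀ p q : Fin d → ℝ, (∀ t, 0 ≤ p t) → (∑ t, p t = 1) →
        (∀ t, 0 ≤ q t) → (∑ t, q t = 1) →
        ((∑ t, q t * R t ≤ ∑ t, p t * R t) ↔ (∑ t, q t * R' t ≤ ∑ t, p t * R' t)) := by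
      intro p q hp0 hp1 hq0 hq1
      have hPs : ∀ a : Fin 2, RowStochastic
          ((fun a : Fin 2 => Matrix.of fun _ t => if a = 0 then p t else q t) a) := by
        intro a
        constructor
        · intro s t; by_cases ha : a = 0 <;> simp [ha, hp0 t, hq0 t]
        · intro s; by_cases ha : a = 0 <;> simp [ha, hp1, hq1]
      have h := hbe 2 (by norm_num) _ hPs (1/2) (by norm_num) (by norm_num) (fun _ => 0)
      rw [env_char R p q hp0 hp1 hq0 hq1, env_char R' p q hp0 hp1 hq0 hq1] at h
      exact h
    have hdot : ∀ (f : Fin d → ℝ) (s : Fin d),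
        ∑ u, (if u = s then (1:ℝ) else 0) * f u = f s := by
      intro f s
      simp [ite_mul]
    have hmass : ∀ s : Fin d, (∀ t, (0:ℝ) ≤ if t = s then 1 else 0) ∧
        ((∑ t, (if t = s then (1:ℝ) else 0)) = 1) := by
      intro s
      constructor
      · intro t; split <;> norm_num
      · simp
    have Hpt : ∀ s t : Fin d, (R t ≤ R s ↔ R' t ≤ R' s) := by
      intro s t
      have h := H (fun u => if u = s then 1 else 0) (fun u => if u = t then 1 else 0)
        (hmass s).1 (hmass s).2 (hmass t).1 (hmass t).2
      rw [hdot R s, hdot R t, hdot R' s, hdot R' t] at h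
      exact h
    by_cases hc : ∃ c : ℝ, R = fun _ => c
    · have hc' : ∃ c : ℝ, R' = fun _ => c := by
        obtain ⟨c, hcR⟩ := hc
        have s0 : Fin d := ⟨0, Nat.pos_of_ne_zero (NeZero.ne d)⟩
        refine ⟨R' s0, funext fun t => ?_⟩
        have hRc : ∀ u v : Fin d, R u ≤ R v := by intro u v; rw [hcR]
        exact le_antisymm ((Hpt s0 t).mp (hRc t s0)) ((Hpt t s0).mp (hRc s0 t))
      simp [canon, if_pos hc, if_pos hc']
    · have hc' : ¬ ∃ c : ℝ, R' = fun _ => c := by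
        intro hex
        apply hc
        obtain ⟨c, hcR'⟩ := hex
        have s0 : Fin d := ⟨0, Nat.pos_of_ne_zero (NeZero.ne d)⟩
        refine ⟨R s0, funext fun t => ?_⟩
        have hRc : ∀ u v : Fin d, R' u ≤ R' v := by intro u v; rw [hcR']
        exact le_antisymm ((Hpt s0 t).mpr (hRc t s0)) ((Hpt t s0).mpr (hRc s0 t))
      obtain ⟨a1, b1, hma, hmi, hub, hlb, hgap⟩ := exists_gap hc
      have hub' : ∀ t, R' t ≤ R' a1 := fun t => (Hpt a1 t).mp (hub t)
      have hlb' : ∀ t, R' b1 ≤ R' t := fun t => (Hpt t b1).mp (hlb t)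
      have hma' : Finset.univ.sup' Finset.univ_nonempty R' = R' a1 :=
        le_antisymm (Finset.sup'_le _ _ fun t _ => hub' t)
          (Finset.le_sup' R' (Finset.mem_univ a1))
      have hmi' : Finset.univ.inf' Finset.univ_nonempty R' = R' b1 :=
        le_antisymm (Finset.inf'_le R' (Finset.mem_univ b1))
          (Finset.le_inf' _ _ fun t _ => hlb' t)
      have hgap' : R' b1 < R' a1 := by
        rcases eq_or_lt_of_le (hlb' a1) with h | h
        · exact absurd ⟨R' b1, funext fun t => le_antisymm (h ▸ hub' t) (hlb' t)⟩ hc'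
        · exact h
      have hΔ : (0:ℝ) < R a1 - R b1 := by linarith
      have hΔ' : (0:ℝ) < R' a1 - R' b1 := by linarith
      funext s
      simp only [canon, if_neg hc, if_neg hc']
      rw [hma, hmi, hma', hmi']
      set lam := (R s - R b1) / (R a1 - R b1) with hlam
      have hlam0 : 0 ≤ lam := div_nonneg (by linarith [hlb s]) hΔ.le
      have hlam1 : lam ≤ 1 := by
        rw [hlam, div_le_one hΔ]
        linarith [hub s]
      set q0 : Fin d → ℝ := fun t =>
        lam * (if t = a1 then 1 else 0) + (1 - lam) * (if t = b1 then 1 else 0) with hq0def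
      have hq0nn : ∀ t, 0 ≤ q0 t := by
        intro t
        have h1 : (0:ℝ) ≤ if t = a1 then 1 else 0 := by split <;> norm_num
        have h2 : (0:ℝ) ≤ if t = b1 then 1 else 0 := by split <;> norm_num
        have e1 := mul_nonneg hlam0 h1
        have e2 := mul_nonneg (by linarith : (0:ℝ) ≤ 1 - lam) h2
        simp only [hq0def]
        linarith
      have hq0sum : ∑ t, q0 t = 1 := by
        simp only [hq0def]
        rw [Finset.sum_add_distrib, ← Finset.mul_sum, ← Finset.mul_sum]
        simp
      have hq0dot : ∀ f : Fin d → ℝ,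
          ∑ t, q0 t * f t = lam * f a1 + (1 - lam) * f b1 := by
        intro f
        simp only [hq0def]
        have he : ∀ t, (lam * (if t = a1 then 1 else 0)
              + (1 - lam) * (if t = b1 then 1 else 0)) * f t
            = lam * ((if t = a1 then 1 else 0) * f t)
              + (1 - lam) * ((if t = b1 then 1 else 0) * f t) := fun t => by ring
        rw [Finset.sum_congr rfl fun t _ => he t, Finset.sum_add_distrib,
          ← Finset.mul_sum, ← Finset.mul_sum, hdot f a1, hdot f b1]
      have hdotR : ∑ t, q0 t * R t = R s := by
        rw [hq0dot R]
        have he : lam * (R a1 - R b1) = R s - R b1 := by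
          rw [hlam]; field_simp
        linarith
      have h1 := (H (fun u => if u = s then 1 else 0) q0
        (hmass s).1 (hmass s).2 hq0nn hq0sum).mp
        (by rw [hdot R s, hdotR])
      have h2 := (H q0 (fun u => if u = s then 1 else 0)
        hq0nn hq0sum (hmass s).1 (hmass s).2).mp
        (by rw [hdot R s, hdotR])
      rw [hdot R' s, hq0dot R'] at h1 h2
      have hR's : R' s = lam * R' a1 + (1 - lam) * R' b1 := le_antisymm h2 h1
      rw [hR's]
      field_simp
      ring
  · -- equal canonical forms imply behavioral equivalence
    intro hcc m hm P hP γ hγ0 hγ1 π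
    by_cases hc : ∃ c : ℝ, R = fun _ => c
    · have hc' : ∃ c : ℝ, R' = fun _ => c := by
        by_contra hc'
        obtain ⟨a2, b2, hma', hmi', hub', hlb', hgap'⟩ := exists_gap hc'
        have h0 := congrFun hcc a2
        simp only [canon, if_pos hc, if_neg hc', Pi.zero_apply] at h0
        rw [hma', hmi', div_self (by linarith : R' a2 - R' b2 ≠ 0)] at h0
        norm_num at h0
      obtain ⟨c, hcR⟩ := hc
      obtain ⟨c', hcR'⟩ := hc'
      constructor
      · intro _ π' s
        simp only [hcR', valueVec_const hP hγ0 hγ1]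
        exact le_rfl
      · intro _ π' s
        simp only [hcR, valueVec_const hP hγ0 hγ1]
        exact le_rfl
    · have hc' : ¬ ∃ c : ℝ, R' = fun _ => c := by
        intro hex
        apply hc
        exfalso
        obtain ⟨a1, b1, hma, hmi, hub, hlb, hgap⟩ := exists_gap hc
        have h0 := congrFun hcc a1
        simp only [canon, if_neg hc, if_pos hex, Pi.zero_apply] at h0
        rw [hma, hmi, div_self (by linarith : R a1 - R b1 ≠ 0)] at h0
        norm_num at h0
      obtain ⟨a1, b1, hma, hmi, hub, hlb, hgap⟩ := exists_gap hc
      obtain ⟨a2, b2, hma', hmi', hub', hlb', hgap'⟩ := exists_gap hc'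
      have hΔ : (0:ℝ) < R a1 - R b1 := by linarith
      have hΔ' : (0:ℝ) < R' a2 - R' b2 := by linarith
      set a : ℝ := (R' a2 - R' b2) / (R a1 - R b1) with ha_def
      set b : ℝ := R' b2 - a * R b1 with hb_def
      have ha : 0 < a := div_pos hΔ' hΔ
      have haff : ∀ s, R' s = a * R s + b := by
        intro s
        have h0 := congrFun hcc s
        simp only [canon, if_neg hc, if_neg hc'] at h0
        rw [hma, hmi, hma', hmi'] at h0
        have h1 : (R s - R b1) * (R' a2 - R' b2) = (R' s - R' b2) * (R a1 - R b1) :=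
          (div_eq_div_iff hΔ.ne' hΔ'.ne').mp h0
        rw [hb_def, ha_def]
        field_simp
        linarith [h1]
      have hR'eq : R' = fun s => a * R s + b := funext haff
      have hval : ∀ π₀ : Fin d → Fin m, valueVec γ P π₀ R'
          = fun s => a * valueVec γ P π₀ R s + b / (1 - γ) := by
        intro π₀
        rw [hR'eq, valueVec_affine hP hγ0 hγ1]
      constructor
      · intro h π' s
        rw [congrFun (hval π') s, congrFun (hval π) s]
        exact add_le_add_left (mul_le_mul_of_nonneg_left (h π' s) ha.le) _
      · intro h π' s
        have h2 := h π' s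
        rw [congrFun (hval π') s, congrFun (hval π) s] at h2
        exact le_of_mul_le_mul_left (le_of_add_le_add_right h2) ha
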